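/- For every integer n > 1, DE3(n+2) + DE3(n−1) equals the number of 4-regular partitions of n, i.e. the number of partitions of n into parts none of which is divisible by 4. -/

import Mathlib

/-- `DE1 n` is the number of partitions of `n` in which no even part is repeated
and the largest part is odd. -/
noncomputable def DE1 (n : ℕ) : ℕ :=
  Nat.card {p : n.Partition //
    (∀ k ∈ p.parts, Even k → p.parts.count k = 1) ∧
    ∃ k ∈ p.parts, Odd k ∧ ∀ j ∈ p.parts, j ≤ k}

/-- `DE2 n` is the number of partitions of `n` in which no even part is repeated,
the largest part is odd and appears at least twice. -/
noncomputable def DE2 (n : ℕ) : ℕ :=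
  Nat.card {p : n.Partition //
    (∀ k ∈ p.parts, Even k → p.parts.count k = 1) ∧
    ∃ k ∈ p.parts, Odd k ∧ 2 ≤ p.parts.count k ∧ ∀ j ∈ p.parts, j ≤ k}

/-- `DE3 n` is the number of partitions of `n` in which no even part is repeated,
the largest part is odd and appears exactly once. -/
noncomputable def DE3 (n : ℕ) : ℕ :=
  Nat.card {p : n.Partition //
    (∀ k ∈ p.parts, Even k → p.parts.count k = 1) ∧
    ∃ k ∈ p.parts, Odd k ∧ p.parts.count k = 1 ∧ ∀ j ∈ p.parts, j ≤ k}



open Finsupp Finset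

namespace Stmt8

/-! ### weight -/

/-- weight of a multiplicity function -/
noncomputable def wtHom : (ℕ →₀ ℕ) →+ ℕ :=
  Finsupp.liftAddHom fun a => (AddMonoidHom.mulRight a)

lemma wtHom_single (a c : ℕ) : wtHom (Finsupp.single a c) = c * a := by
  simp [wtHom]

lemma wtHom_eq_sum (f : ℕ →₀ ℕ) : wtHom f = f.sum fun a c => c * a := rfl

/-! ### 2-adic decomposition -/

def exp2 (k : ℕ) : ℕ := k.factorization 2

def core (k : ℕ) : ℕ := k / 2 ^ exp2 k

lemma pow_exp2_mul_core (k : ℕ) : 2 ^ exp2 k * core k = k :=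
  Nat.ordProj_mul_ordCompl_eq_self k 2

lemma core_odd {k : ℕ} (hk : k ≠ 0) : Odd (core k) := by
  have := Nat.not_dvd_ordCompl Nat.prime_two hk
  rw [Nat.odd_iff, Nat.two_dvd_ne_zero.symm] at *
  simpa [core, exp2] using this

lemma exp2_pos {k : ℕ} (hk : k ≠ 0) (he : ¬ Odd k) : 1 ≤ exp2 k := by
  rw [Nat.not_odd_iff_even] at he
  have h2 : 2 ∣ k := he.two_dvd
  exact (Nat.Prime.dvd_iff_one_le_factorization Nat.prime_two hk).1 h2

lemma decomp_unique {a m b m' : ℕ} (hm : Odd m) (hm' : Odd m')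
    (h : 2 ^ a * m = 2 ^ b * m') : a = b ∧ m = m' := by
  have hm0 : m ≠ 0 := by rintro rfl; simp at hm
  have hm'0 : m' ≠ 0 := by rintro rfl; simp at hm'
  have key : ∀ (x y : ℕ), Odd y → (2 ^ x * y).factorization 2 = x := by
    intro x y hy
    have hy0 : y ≠ 0 := by rintro rfl; simp at hy
    have hdvd : ¬ 2 ∣ y := Nat.two_dvd_ne_zero.mpr (Nat.odd_iff.mp hy)
    rw [Nat.factorization_mul (by positivity) hy0, Nat.factorization_pow]
    simp [Nat.factorization_eq_zero_of_not_dvd hdvd,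
      Nat.Prime.factorization_self Nat.prime_two]
  have hab : a = b := by
    rw [← key a m hm, h, key b m' hm']
  constructor
  · exact hab
  · subst hab
    exact Nat.eq_of_mul_eq_mul_left (by positivity) h

lemma exp2_spec {a m : ℕ} (hm : Odd m) : exp2 (2 ^ a * m) = a ∧ core (2 ^ a * m) = m := by
  have h0 : 2 ^ a * m ≠ 0 := by
    have : m ≠ 0 := by rintro rfl; simp at hm
    positivity
  exact decomp_unique (core_odd h0) hm (by rw [pow_exp2_mul_core])


lemma odd_ne_zero {m : ℕ} (hm : Odd m) : m ≠ 0 := by rintro rfl; simp at hm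

lemma not_odd_two_mul (m : ℕ) : ¬ Odd (2 * m) := by
  simp [Nat.not_odd_iff_even, even_two_mul]

/-! ### the Glaisher maps -/

noncomputable def fwd (f : ℕ →₀ ℕ) : ℕ →₀ ℕ :=
  f.sum fun k c => if Odd k then Finsupp.single k c
    else ∑ b ∈ c.bitIndices.toFinset, Finsupp.single (2 ^ b * k) 1

noncomputable def bwd (g : ℕ →₀ ℕ) : ℕ →₀ ℕ :=
  g.sum fun k c => if Odd k then Finsupp.single k c
    else Finsupp.single (2 * core k) (c * 2 ^ (exp2 k - 1))

lemma fwd_apply_odd (f : ℕ →₀ ℕ) {x : ℕ} (hx : Odd x) : fwd f x = f x := by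
  rw [fwd, Finsupp.sum_apply, Finsupp.sum, Finset.sum_eq_single x]
  · rw [if_pos hx, Finsupp.single_eq_same]
  · intro k _ hkx
    by_cases hk2 : Odd k
    · rw [if_pos hk2]; exact Finsupp.single_eq_of_ne' hkx
    · rw [if_neg hk2, Finsupp.finset_sum_apply]
      refine Finset.sum_eq_zero fun b _ => Finsupp.single_eq_of_ne' fun h => ?_
      have : Even (2 ^ b * k) := (Nat.not_odd_iff_even.1 hk2).mul_left _
      rw [h] at this
      exact (Nat.not_odd_iff_even.2 this) hx
  · intro hx'
    rw [Finsupp.notMem_support_iff] at hx'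
    rw [hx', if_pos hx, Finsupp.single_zero, Finsupp.coe_zero, Pi.zero_apply]

lemma fwd_apply_zero {f : ℕ →₀ ℕ} (hf0 : f 0 = 0) : fwd f 0 = 0 := by
  rw [fwd, Finsupp.sum_apply, Finsupp.sum]
  refine Finset.sum_eq_zero fun k hk => ?_
  have hk0 : k ≠ 0 := fun h => (Finsupp.mem_support_iff.1 hk) (h ▸ hf0)
  by_cases hk2 : Odd k
  · rw [if_pos hk2]; exact Finsupp.single_eq_of_ne' hk0
  · rw [if_neg hk2, Finsupp.finset_sum_apply]
    exact Finset.sum_eq_zero fun b _ => Finsupp.single_eq_of_ne' (by positivity)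

lemma fwd_apply_even {f : ℕ →₀ ℕ} (hf4 : ∀ k, 4 ∣ k → f k = 0) {m : ℕ} (a : ℕ)
    (hm : Odd m) :
    fwd f (2 ^ (a + 1) * m) = if a ∈ (f (2 * m)).bitIndices.toFinset then 1 else 0 := by
  have hm0 : m ≠ 0 := odd_ne_zero hm
  rw [fwd, Finsupp.sum_apply, Finsupp.sum, Finset.sum_eq_single (2 * m)]
  · rw [if_neg (not_odd_two_mul m), Finsupp.finset_sum_apply]
    by_cases ha : a ∈ (f (2 * m)).bitIndices.toFinset
    · rw [if_pos ha, Finset.sum_eq_single a]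
      · have h : 2 ^ a * (2 * m) = 2 ^ (a + 1) * m := by ring
        rw [h, Finsupp.single_eq_same]
      · intro b _ hba
        refine Finsupp.single_eq_of_ne' fun h => hba ?_
        have h' : 2 ^ (b + 1) * m = 2 ^ (a + 1) * m := by rw [← h]; ring
        have := (decomp_unique hm hm h').1
        omega
      · intro h; exact absurd ha h
    · rw [if_neg ha]
      refine Finset.sum_eq_zero fun b hb => Finsupp.single_eq_of_ne' fun h => ?_
      have h' : 2 ^ (b + 1) * m = 2 ^ (a + 1) * m := by rw [← h]; ring
      have hba := (decomp_unique hm hm h').1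
      exact ha (by rwa [← Nat.succ_injective hba])
  · intro k hk hkne
    by_cases hodd : Odd k
    · rw [if_pos hodd]
      refine Finsupp.single_eq_of_ne' fun h => ?_
      have : Even (2 ^ (a + 1) * m) := ⟨2 ^ a * m, by ring⟩
      rw [← h] at this
      exact (Nat.not_odd_iff_even.2 this) hodd
    · rw [if_neg hodd, Finsupp.finset_sum_apply]
      refine Finset.sum_eq_zero fun b _ => Finsupp.single_eq_of_ne' fun h => ?_
      have hk0 : k ≠ 0 := by
        rintro rfl
        rw [mul_zero] at h
        exact hm0 (by simpa using h.symm)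
      have h4 : ¬ 4 ∣ k := fun hd => (Finsupp.mem_support_iff.1 hk) (hf4 k hd)
      have he : exp2 k = 1 := by
        have h1 : 1 ≤ exp2 k := exp2_pos hk0 hodd
        by_contra hne
        have h2 : 2 ≤ exp2 k := by omega
        refine h4 ⟨2 ^ (exp2 k - 2) * core k, ?_⟩
        have hp : (4 : ℕ) * 2 ^ (exp2 k - 2) = 2 ^ exp2 k := by
          have : (4 : ℕ) = 2 ^ 2 := by norm_num
          rw [this, ← pow_add]
          congr 1
          omega
        rw [← mul_assoc, hp, pow_exp2_mul_core]
      have hck : 2 * core k = k := by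
        have := pow_exp2_mul_core k
        rwa [he, pow_one] at this
      have h' : 2 ^ (b + 1) * core k = 2 ^ (a + 1) * m := by
        calc 2 ^ (b + 1) * core k = 2 ^ b * (2 * core k) := by ring
          _ = 2 ^ b * k := by rw [hck]
          _ = 2 ^ (a + 1) * m := h
      have := (decomp_unique (core_odd hk0) hm h').2
      exact hkne (by rw [← hck, this])
  · intro h2m'
    rw [Finsupp.notMem_support_iff] at h2m'
    rw [h2m', if_neg (not_odd_two_mul m)]
    simp


lemma bwd_apply_odd (g : ℕ →₀ ℕ) {x : ℕ} (hx : Odd x) : bwd g x = g x := by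
  rw [bwd, Finsupp.sum_apply, Finsupp.sum, Finset.sum_eq_single x]
  · rw [if_pos hx, Finsupp.single_eq_same]
  · intro k _ hkx
    by_cases hk2 : Odd k
    · rw [if_pos hk2]; exact Finsupp.single_eq_of_ne' hkx
    · rw [if_neg hk2]
      refine Finsupp.single_eq_of_ne' fun h => ?_
      exact (Nat.not_odd_iff_even.2 (h ▸ even_two_mul (core k))) hx
  · intro hx'
    rw [Finsupp.notMem_support_iff] at hx'
    rw [hx', if_pos hx, Finsupp.single_zero, Finsupp.coe_zero, Pi.zero_apply]

lemma bwd_apply_of_four_dvd {g : ℕ →₀ ℕ} (hg0 : g 0 = 0) {x : ℕ} (hx : 4 ∣ x) :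
    bwd g x = 0 := by
  rw [bwd, Finsupp.sum_apply, Finsupp.sum]
  refine Finset.sum_eq_zero fun k hk => ?_
  have hk0 : k ≠ 0 := fun h => (Finsupp.mem_support_iff.1 hk) (h ▸ hg0)
  by_cases hk2 : Odd k
  · rw [if_pos hk2]
    refine Finsupp.single_eq_of_ne fun h => ?_
    subst h
    rcases hx with ⟨c, rfl⟩
    rcases hk2 with ⟨t, ht⟩
    omega
  · rw [if_neg hk2]
    refine Finsupp.single_eq_of_ne fun h => ?_
    rcases core_odd hk0 with ⟨t, ht⟩
    rcases hx with ⟨c, hc⟩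
    omega

lemma bwd_apply_two_mul {g : ℕ →₀ ℕ} {m : ℕ} (hm : Odd m) (N : ℕ)
    (hN : ∀ b, N ≤ b → g (2 ^ (b + 1) * m) = 0) :
    bwd g (2 * m) = ∑ b ∈ Finset.range N, g (2 ^ (b + 1) * m) * 2 ^ b := by
  classical
  have hm0 : m ≠ 0 := odd_ne_zero hm
  rw [bwd, Finsupp.sum_apply, Finsupp.sum]
  have hterm : ∀ k ∈ g.support,
      ((if Odd k then Finsupp.single k (g k)
        else Finsupp.single (2 * core k) (g k * 2 ^ (exp2 k - 1))) : ℕ →₀ ℕ) (2 * m)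
      = if ¬ Odd k ∧ core k = m then g k * 2 ^ (exp2 k - 1) else 0 := by
    intro k _
    by_cases hk2 : Odd k
    · rw [if_pos hk2, if_neg (by tauto)]
      exact Finsupp.single_eq_of_ne fun h => (not_odd_two_mul m) (h ▸ hk2)
    · rw [if_neg hk2]
      by_cases hcm : core k = m
      · rw [if_pos ⟨hk2, hcm⟩, hcm, Finsupp.single_eq_same]
      · rw [if_neg (by tauto)]
        exact Finsupp.single_eq_of_ne fun h => hcm (by omega)
  rw [Finset.sum_congr rfl hterm, ← Finset.sum_filter]
  -- now a sum over the filtered support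
  rw [Finset.sum_subset (s₁ := (g.support.filter fun k => ¬ Odd k ∧ core k = m))
      (s₂ := (Finset.range N).image fun b => 2 ^ (b + 1) * m)]
  · rw [Finset.sum_image]
    · refine Finset.sum_congr rfl fun b _ => ?_
      have hsp := exp2_spec (a := b + 1) hm
      rw [hsp.1]
      simp
    · intro b _ b' _ h
      exact Nat.succ_injective (decomp_unique hm hm h).1
  · intro k hk
    rw [Finset.mem_filter] at hk
    obtain ⟨hks, hkodd, hkcm⟩ := hk
    have hk0 : k ≠ 0 := by
      rintro rfl
      simp [core] at hkcm
      exact hm0 hkcm.symm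
    have he : 1 ≤ exp2 k := exp2_pos hk0 hkodd
    have hk_eq : k = 2 ^ (exp2 k - 1 + 1) * m := by
      rw [← hkcm]
      have h1 : exp2 k - 1 + 1 = exp2 k := by omega
      rw [h1, pow_exp2_mul_core]
    rw [Finset.mem_image]
    refine ⟨exp2 k - 1, ?_, hk_eq.symm⟩
    rw [Finset.mem_range]
    by_contra hb
    push_neg at hb
    have := hN _ hb
    rw [← hk_eq] at this
    exact (Finsupp.mem_support_iff.1 hks) this
  · intro k hk hk'
    rw [Finset.mem_image] at hk
    obtain ⟨b, _, rfl⟩ := hk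
    have hsp := exp2_spec (a := b + 1) hm
    rw [Finset.mem_filter] at hk'
    have hodd : ¬ Odd (2 ^ (b + 1) * m) := by
      intro h
      rcases h with ⟨t, ht⟩
      have : (2:ℕ) ∣ 2 ^ (b + 1) * m := Dvd.dvd.mul_right (dvd_pow_self 2 (Nat.succ_ne_zero b)) m
      omega
    have : g (2 ^ (b + 1) * m) = 0 := by
      by_contra hne
      exact hk' ⟨Finsupp.mem_support_iff.2 hne, hodd, hsp.2⟩
    rw [this, zero_mul]


lemma wt_fwd (f : ℕ →₀ ℕ) : wtHom (fwd f) = wtHom f := by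
  rw [fwd, map_finsuppSum wtHom]
  rw [wtHom_eq_sum]
  refine Finsupp.sum_congr fun k _ => ?_
  by_cases hk2 : Odd k
  · rw [if_pos hk2, wtHom_single]
  · rw [if_neg hk2, map_sum]
    have : ∀ b ∈ (f k).bitIndices.toFinset, wtHom (Finsupp.single (2 ^ b * k) 1) = 2 ^ b * k :=
      fun b _ => by rw [wtHom_single, one_mul]
    rw [Finset.sum_congr rfl this, ← Finset.sum_mul, Finset.twoPowSum_toFinset_bitIndices]

lemma wt_bwd {g : ℕ →₀ ℕ} (hg0 : g 0 = 0) : wtHom (bwd g) = wtHom g := by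
  rw [bwd, map_finsuppSum wtHom, wtHom_eq_sum]
  refine Finsupp.sum_congr fun k hk => ?_
  by_cases hk2 : Odd k
  · rw [if_pos hk2, wtHom_single]
  · rw [if_neg hk2, wtHom_single]
    have hk0 : k ≠ 0 := fun h => (Finsupp.mem_support_iff.1 hk) (h ▸ hg0)
    have he : 1 ≤ exp2 k := exp2_pos hk0 hk2
    have : 2 ^ (exp2 k - 1) * 2 = 2 ^ exp2 k := by
      rw [← pow_succ]
      congr 1
      omega
    calc g k * 2 ^ (exp2 k - 1) * (2 * core k)
        = g k * (2 ^ (exp2 k - 1) * 2 * core k) := by ring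
      _ = g k * (2 ^ exp2 k * core k) := by rw [this]
      _ = g k * k := by rw [pow_exp2_mul_core]

lemma bwd_fwd {f : ℕ →₀ ℕ} (hf0 : f 0 = 0) (hf4 : ∀ k, 4 ∣ k → f k = 0) :
    bwd (fwd f) = f := by
  ext x
  rcases Nat.even_or_odd x with hx | hx
  swap
  · rw [bwd_apply_odd _ hx, fwd_apply_odd _ hx]
  by_cases hx0 : x = 0
  · subst hx0
    rw [bwd_apply_of_four_dvd (fwd_apply_zero hf0) (dvd_zero 4), hf0]
  have hm : Odd (core x) := core_odd hx0
  have he : 1 ≤ exp2 x := exp2_pos hx0 (Nat.not_odd_iff_even.2 hx)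
  by_cases he2 : 2 ≤ exp2 x
  · have h4 : 4 ∣ x := by
      refine ⟨2 ^ (exp2 x - 2) * core x, ?_⟩
      have hp : (4 : ℕ) * 2 ^ (exp2 x - 2) = 2 ^ exp2 x := by
        have h42 : (4 : ℕ) = 2 ^ 2 := by norm_num
        rw [h42, ← pow_add]
        congr 1
        omega
      rw [← mul_assoc, hp, pow_exp2_mul_core]
    rw [bwd_apply_of_four_dvd (fwd_apply_zero hf0) h4, hf4 x h4]
  · have he1 : exp2 x = 1 := by omega
    have hx2m : x = 2 * core x := by
      conv_lhs => rw [← pow_exp2_mul_core x]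
      rw [he1, pow_one]
    set m := core x with hmdef
    set N := f (2 * m) + 1 with hNdef
    have hN : ∀ b, N ≤ b → fwd f (2 ^ (b + 1) * m) = 0 := by
      intro b hb
      rw [fwd_apply_even hf4 b hm, if_neg]
      intro hmem
      rw [List.mem_toFinset] at hmem
      have h1 := Nat.two_pow_le_of_mem_bitIndices hmem
      have h2 := Nat.lt_two_pow_self (n := b)
      omega
    rw [hx2m, bwd_apply_two_mul hm N hN]
    have hcongr : ∀ b ∈ Finset.range N, fwd f (2 ^ (b + 1) * m) * 2 ^ b
        = if b ∈ (f (2 * m)).bitIndices.toFinset then 2 ^ b else 0 := by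
      intro b _
      rw [fwd_apply_even hf4 b hm]
      split <;> simp
    rw [Finset.sum_congr rfl hcongr, Finset.sum_ite_mem,
      Finset.inter_eq_right.2 ?_, Finset.twoPowSum_toFinset_bitIndices]
    intro b hb
    rw [List.mem_toFinset] at hb
    have h1 := Nat.two_pow_le_of_mem_bitIndices hb
    have h2 := Nat.lt_two_pow_self (n := b)
    rw [Finset.mem_range]
    omega

lemma fwd_bwd {g : ℕ →₀ ℕ} (hg0 : g 0 = 0) (hged : ∀ k, ¬ Odd k → g k ≤ 1) :
    fwd (bwd g) = g := by
  have hb4 : ∀ k, 4 ∣ k → bwd g k = 0 := fun k hk => bwd_apply_of_four_dvd hg0 hk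
  ext x
  rcases Nat.even_or_odd x with hx | hx
  swap
  · rw [fwd_apply_odd _ hx, bwd_apply_odd _ hx]
  by_cases hx0 : x = 0
  · subst hx0
    rw [fwd_apply_zero (hb4 0 (dvd_zero 4)), hg0]
  have hm : Odd (core x) := core_odd hx0
  have he : 1 ≤ exp2 x := exp2_pos hx0 (Nat.not_odd_iff_even.2 hx)
  set a := exp2 x - 1 with hadef
  set m := core x with hmdef
  have hxrep : x = 2 ^ (a + 1) * m := by
    conv_lhs => rw [← pow_exp2_mul_core x]
    congr 1
    congr 1
    omega
  set N := a + 1 + g.support.sup id with hNdef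
  have hm1 : 1 ≤ m := hm.pos
  have hN : ∀ b, N ≤ b → g (2 ^ (b + 1) * m) = 0 := by
    intro b hb
    by_contra hne
    have hmem : 2 ^ (b + 1) * m ∈ g.support := Finsupp.mem_support_iff.2 hne
    have h1 : id (2 ^ (b + 1) * m) ≤ g.support.sup id := Finset.le_sup hmem
    simp only [id_eq] at h1
    have h2 : b < 2 ^ b := Nat.lt_two_pow_self (n := b)
    have h3 : 2 ^ b ≤ 2 ^ (b + 1) * m := by
      calc 2 ^ b ≤ 2 ^ (b + 1) := Nat.pow_le_pow_right (by norm_num) (by omega)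
        _ ≤ 2 ^ (b + 1) * m := Nat.le_mul_of_pos_right _ hm1
    omega
  have hcongr : ∀ b ∈ Finset.range N, g (2 ^ (b + 1) * m) * 2 ^ b
      = if g (2 ^ (b + 1) * m) = 1 then 2 ^ b else 0 := by
    intro b _
    have hle : g (2 ^ (b + 1) * m) ≤ 1 := hged _ (by
      intro hodd
      rcases hodd with ⟨t, ht⟩
      have : (2:ℕ) ∣ 2 ^ (b + 1) * m :=
        Dvd.dvd.mul_right (dvd_pow_self 2 (Nat.succ_ne_zero b)) m
      omega)
    rcases Nat.le_one_iff_eq_zero_or_eq_one.1 hle with h | h <;> rw [h] <;> simp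
  have hbits : (bwd g (2 * m)).bitIndices.toFinset
      = (Finset.range N).filter (fun b => g (2 ^ (b + 1) * m) = 1) := by
    rw [bwd_apply_two_mul hm N hN, Finset.sum_congr rfl hcongr, ← Finset.sum_filter,
      Finset.toFinset_bitIndices_twoPowSum]
  rw [hxrep, fwd_apply_even hb4 a hm, hbits]
  have haN : a ∈ Finset.range N := Finset.mem_range.2 (by omega)
  have hle : g (2 ^ (a + 1) * m) ≤ 1 := hged _ (by
    intro hodd
    rw [← hxrep] at hodd
    exact (Nat.not_odd_iff_even.2 hx) hodd)
  by_cases hg1 : g (2 ^ (a + 1) * m) = 1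
  · have hmem : a ∈ (Finset.range N).filter (fun b => g (2 ^ (b + 1) * m) = 1) :=
      Finset.mem_filter.2 ⟨haN, hg1⟩
    rw [if_pos hmem, hg1]
  · have hmem : a ∉ (Finset.range N).filter (fun b => g (2 ^ (b + 1) * m) = 1) :=
      fun hmem => hg1 (Finset.mem_filter.1 hmem).2
    rw [if_neg hmem]
    omega

lemma fwd_zero_apply {f : ℕ →₀ ℕ} (hf0 : f 0 = 0) : fwd f 0 = 0 := fwd_apply_zero hf0

lemma fwd_ed {f : ℕ →₀ ℕ} (hf0 : f 0 = 0) (hf4 : ∀ k, 4 ∣ k → f k = 0) :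
    ∀ x, ¬ Odd x → fwd f x ≤ 1 := by
  intro x hx
  by_cases hx0 : x = 0
  · subst hx0
    rw [fwd_apply_zero hf0]
    omega
  have hm : Odd (core x) := core_odd hx0
  have he : 1 ≤ exp2 x := exp2_pos hx0 hx
  have hxrep : x = 2 ^ (exp2 x - 1 + 1) * core x := by
    conv_lhs => rw [← pow_exp2_mul_core x]
    congr 1
    congr 1
    omega
  rw [hxrep, fwd_apply_even hf4 _ hm]
  split <;> omega


/-! ### glue between partitions and finsupps -/

lemma wtHom_toFinsupp (s : Multiset ℕ) : wtHom s.toFinsupp = s.sum := by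
  induction s using Multiset.induction_on with
  | empty => simp
  | cons a t ih =>
    rw [← Multiset.singleton_add, Multiset.toFinsupp_add, map_add, ih,
      Multiset.toFinsupp_singleton, wtHom_single, Multiset.sum_add]
    simp

lemma toMultiset_wt (f : ℕ →₀ ℕ) : f.toMultiset.sum = wtHom f := by
  rw [← wtHom_toFinsupp, Finsupp.toMultiset_toFinsupp]

/-- build a partition from a multiplicity function -/
noncomputable def toPart {n : ℕ} (f : ℕ →₀ ℕ) (hf0 : f 0 = 0) (hw : wtHom f = n) : n.Partition where
  parts := f.toMultiset
  parts_pos := by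
    intro i hi
    rw [Finsupp.mem_toMultiset, Finsupp.mem_support_iff] at hi
    exact Nat.pos_of_ne_zero fun h => hi (h ▸ hf0)
  parts_sum := by rw [toMultiset_wt, hw]

lemma toPart_parts {n : ℕ} (f : ℕ →₀ ℕ) (hf0 : f 0 = 0) (hw : wtHom f = n) :
    (toPart f hf0 hw).parts = f.toMultiset := rfl

lemma part_toFinsupp_zero {n : ℕ} (p : n.Partition) : p.parts.toFinsupp 0 = 0 := by
  rw [Multiset.toFinsupp_apply, Multiset.count_eq_zero]
  exact fun h => absurd (p.parts_pos h) (lt_irrefl 0)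

lemma part_toFinsupp_wt {n : ℕ} (p : n.Partition) : wtHom p.parts.toFinsupp = n := by
  rw [wtHom_toFinsupp, p.parts_sum]

/-- The Glaisher-style equivalence between even-distinct and 4-regular partitions. -/
noncomputable def glaisherEquiv (n : ℕ) :
    {p : n.Partition // ∀ k ∈ p.parts, Even k → p.parts.count k = 1} ≃
    {p : n.Partition // ∀ k ∈ p.parts, ¬ (4 ∣ k)} where
  toFun := fun ⟨p, hp⟩ => by
    refine ⟨toPart (bwd p.parts.toFinsupp)
      (bwd_apply_of_four_dvd (part_toFinsupp_zero p) (dvd_zero 4))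
      (by rw [wt_bwd (part_toFinsupp_zero p), part_toFinsupp_wt]), ?_⟩
    intro k hk hdvd
    rw [toPart_parts, Finsupp.mem_toMultiset, Finsupp.mem_support_iff] at hk
    exact hk (bwd_apply_of_four_dvd (part_toFinsupp_zero p) hdvd)
  invFun := fun ⟨q, hq⟩ => by
    have hq4 : ∀ k, 4 ∣ k → q.parts.toFinsupp k = 0 := by
      intro k hk
      rw [Multiset.toFinsupp_apply, Multiset.count_eq_zero]
      exact fun hm => hq k hm hk
    refine ⟨toPart (fwd q.parts.toFinsupp)
      (fwd_apply_zero (part_toFinsupp_zero q))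
      (by rw [wt_fwd, part_toFinsupp_wt]), ?_⟩
    intro k hk hke
    rw [toPart_parts, Finsupp.mem_toMultiset, Finsupp.mem_support_iff] at hk
    rw [toPart_parts, Finsupp.count_toMultiset]
    have := fwd_ed (part_toFinsupp_zero q) hq4 k (Nat.not_odd_iff_even.2 hke)
    omega
  left_inv := by
    rintro ⟨p, hp⟩
    have hged : ∀ k, ¬ Odd k → p.parts.toFinsupp k ≤ 1 := by
      intro k hk
      rw [Multiset.toFinsupp_apply]
      by_cases hm : k ∈ p.parts
      · rw [hp k hm (Nat.not_odd_iff_even.1 hk)]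
      · rw [Multiset.count_eq_zero.2 hm]
        omega
    apply Subtype.ext
    apply Nat.Partition.ext
    simp only [toPart_parts]
    rw [Finsupp.toMultiset_toFinsupp, fwd_bwd (part_toFinsupp_zero p) hged,
      Multiset.toFinsupp_toMultiset]
  right_inv := by
    rintro ⟨q, hq⟩
    have hq4 : ∀ k, 4 ∣ k → q.parts.toFinsupp k = 0 := by
      intro k hk
      rw [Multiset.toFinsupp_apply, Multiset.count_eq_zero]
      exact fun hm => hq k hm hk
    apply Subtype.ext
    apply Nat.Partition.ext
    simp only [toPart_parts]
    rw [Finsupp.toMultiset_toFinsupp, bwd_fwd (part_toFinsupp_zero q) hq4,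
      Multiset.toFinsupp_toMultiset]


/-! ### Step A: the DE3 bijection -/

def APred {N : ℕ} (p : N.Partition) : Prop :=
  (∀ k ∈ p.parts, Even k → p.parts.count k = 1) ∧
    ∃ k ∈ p.parts, Odd k ∧ p.parts.count k = 1 ∧ ∀ j ∈ p.parts, j ≤ k

def CPred {N : ℕ} (p : N.Partition) : Prop :=
  ∀ k ∈ p.parts, Even k → p.parts.count k = 1

lemma msup_mem {s : Multiset ℕ} (hs : s ≠ 0) : s.sup ∈ s := by
  induction s using Multiset.induction_on with
  | empty => simp at hs
  | cons a t ih =>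
    rw [Multiset.sup_cons]
    rcases eq_or_ne t 0 with rfl | ht
    · simp
    · rcases le_total t.sup a with h | h
      · rw [sup_eq_left.2 h]; exact Multiset.mem_cons_self a t
      · rw [sup_eq_right.2 h]; exact Multiset.mem_cons_of_mem (ih ht)

lemma msup_eq {s : Multiset ℕ} {k : ℕ} (hk : k ∈ s) (hmax : ∀ j ∈ s, j ≤ k) : s.sup = k :=
  le_antisymm (Multiset.sup_le.2 hmax) (Multiset.le_sup hk)

lemma parts_ne_zero {N : ℕ} (hN : N ≠ 0) (q : N.Partition) : q.parts ≠ 0 :=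
  fun h => hN (by rw [← q.parts_sum, h, Multiset.sum_zero])

lemma APred_spec {N : ℕ} {p : N.Partition} (hp : APred p) :
    p.parts.sup ∈ p.parts ∧ Odd p.parts.sup ∧ p.parts.count p.parts.sup = 1 ∧
      ∀ j ∈ p.parts, j ≤ p.parts.sup := by
  obtain ⟨-, k, hk, hodd, hcount, hmax⟩ := hp
  rw [msup_eq hk hmax]
  exact ⟨hk, hodd, hcount, hmax⟩

lemma APred_three_le {N : ℕ} (hN : 2 ≤ N) {p : N.Partition} (hp : APred p) :
    3 ≤ p.parts.sup := by
  obtain ⟨hk, hodd, hcount, hmax⟩ := APred_spec hp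
  by_contra h
  push_neg at h
  have hk1 : p.parts.sup = 1 := by
    have := p.parts_pos hk
    rcases hodd with ⟨t, ht⟩
    omega
  have hall : ∀ j ∈ p.parts, j = 1 := fun j hj =>
    le_antisymm (hk1 ▸ hmax j hj) (p.parts_pos hj)
  have hrep := Multiset.eq_replicate_card.2 hall
  have hcard : Multiset.card p.parts = 1 := by
    have := hcount
    rw [hk1] at this
    rw [hrep, Multiset.count_replicate] at this
    simpa using this
  have := p.parts_sum
  rw [hrep, hcard, Multiset.replicate_one, Multiset.sum_singleton] at this
  omega


variable {n : ℕ}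

def fwdA (hn : 1 < n) (p : (n + 2).Partition) (hp : APred p) : n.Partition where
  parts := (p.parts.sup - 2) ::ₘ p.parts.erase p.parts.sup
  parts_pos := by
    intro i hi
    rcases Multiset.mem_cons.1 hi with rfl | hi
    · have h3 := APred_three_le (by omega) hp
      omega
    · exact p.parts_pos (Multiset.mem_of_mem_erase hi)
  parts_sum := by
    have h3 := APred_three_le (by omega) hp
    obtain ⟨hk, -, -, -⟩ := APred_spec hp
    have hsum : p.parts.sup + (p.parts.erase p.parts.sup).sum = n + 2 := by
      rw [← Multiset.sum_cons, Multiset.cons_erase hk, p.parts_sum]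
    rw [Multiset.sum_cons]
    omega

lemma fwdA_parts (hn : 1 < n) (p : (n + 2).Partition) (hp : APred p) :
    (fwdA hn p hp).parts = (p.parts.sup - 2) ::ₘ p.parts.erase p.parts.sup := rfl

lemma fwdA_cpred (hn : 1 < n) (p : (n + 2).Partition) (hp : APred p) :
    CPred (fwdA hn p hp) := by
  obtain ⟨hk, hodd, hcount, hmax⟩ := APred_spec hp
  have h3 := APred_three_le (by omega) hp
  intro j hj hje
  rw [fwdA_parts] at hj ⊢
  have hj1 : j ≠ p.parts.sup - 2 := by
    rcases hodd with ⟨t, ht⟩; rcases hje with ⟨u, hu⟩; omega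
  have hj2 : j ≠ p.parts.sup := by
    rcases hodd with ⟨t, ht⟩; rcases hje with ⟨u, hu⟩; omega
  rw [Multiset.count_cons_of_ne hj1, Multiset.count_erase_of_ne hj2]
  have hjm : j ∈ p.parts := by
    rcases Multiset.mem_cons.1 hj with h | h
    · exact absurd h hj1
    · exact Multiset.mem_of_mem_erase h
  exact hp.1 j hjm hje

def fwdB (hn : 1 < n) (p : (n - 1).Partition) (hp : APred p) : n.Partition where
  parts := (p.parts.sup + 1) ::ₘ p.parts.erase p.parts.sup
  parts_pos := by
    intro i hi
    rcases Multiset.mem_cons.1 hi with rfl | hi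
    · omega
    · exact p.parts_pos (Multiset.mem_of_mem_erase hi)
  parts_sum := by
    obtain ⟨hk, -, -, -⟩ := APred_spec hp
    have hsum : p.parts.sup + (p.parts.erase p.parts.sup).sum = n - 1 := by
      rw [← Multiset.sum_cons, Multiset.cons_erase hk, p.parts_sum]
    rw [Multiset.sum_cons]
    omega

lemma fwdB_parts (hn : 1 < n) (p : (n - 1).Partition) (hp : APred p) :
    (fwdB hn p hp).parts = (p.parts.sup + 1) ::ₘ p.parts.erase p.parts.sup := rfl

lemma fwdB_cpred (hn : 1 < n) (p : (n - 1).Partition) (hp : APred p) :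
    CPred (fwdB hn p hp) := by
  obtain ⟨hk, hodd, hcount, hmax⟩ := APred_spec hp
  intro j hj hje
  rw [fwdB_parts] at hj ⊢
  by_cases hj1 : j = p.parts.sup + 1
  · subst hj1
    rw [Multiset.count_cons_self]
    have : p.parts.sup + 1 ∉ p.parts.erase p.parts.sup := by
      intro hm
      have := hmax _ (Multiset.mem_of_mem_erase hm)
      omega
    rw [Multiset.count_eq_zero.2 this]
  · have hj2 : j ≠ p.parts.sup := by
      rcases hodd with ⟨t, ht⟩; rcases hje with ⟨u, hu⟩; omega
    rw [Multiset.count_cons_of_ne hj1, Multiset.count_erase_of_ne hj2]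
    have hjm : j ∈ p.parts := by
      rcases Multiset.mem_cons.1 hj with h | h
      · exact absurd h hj1
      · exact Multiset.mem_of_mem_erase h
    exact hp.1 j hjm hje


section Bwd

lemma sup_mem_parts (hn : 1 < n) (q : n.Partition) : q.parts.sup ∈ q.parts :=
  msup_mem (parts_ne_zero (by omega) q)

lemma sup_pos (hn : 1 < n) (q : n.Partition) : 1 ≤ q.parts.sup := q.parts_pos (sup_mem_parts hn q)

lemma sup_sum (hn : 1 < n) (q : n.Partition) : q.parts.sup + (q.parts.erase q.parts.sup).sum = n := by
  rw [← Multiset.sum_cons, Multiset.cons_erase (sup_mem_parts hn q), q.parts_sum]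

def bwd1 (hn : 1 < n) (q : n.Partition) (hq : CPred q) (hodd : Odd q.parts.sup) : (n + 2).Partition where
  parts := (q.parts.sup + 2) ::ₘ q.parts.erase q.parts.sup
  parts_pos := by
    intro i hi
    rcases Multiset.mem_cons.1 hi with rfl | hi
    · omega
    · exact q.parts_pos (Multiset.mem_of_mem_erase hi)
  parts_sum := by
    have := sup_sum hn q
    rw [Multiset.sum_cons]
    omega

lemma bwd1_parts (hn : 1 < n) (q : n.Partition) (hq : CPred q) (hodd : Odd q.parts.sup) :
    (bwd1 hn q hq hodd).parts = (q.parts.sup + 2) ::ₘ q.parts.erase q.parts.sup := rfl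

lemma bwd1_apred (hn : 1 < n) (q : n.Partition) (hq : CPred q) (hodd : Odd q.parts.sup) : APred (bwd1 hn q hq hodd) := by
  have hsupmem := sup_mem_parts hn q
  have hcount2 : Multiset.count (q.parts.sup + 2) q.parts = 0 := by
    rw [Multiset.count_eq_zero]
    intro hm
    have := Multiset.le_sup (α := ℕ) hm
    omega
  constructor
  · intro j hj hje
    rw [bwd1_parts] at hj ⊢
    have hj1 : j ≠ q.parts.sup + 2 := by
      rcases hodd with ⟨t, ht⟩; rcases hje with ⟨u, hu⟩; omega
    have hj2 : j ≠ q.parts.sup := by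
      rcases hodd with ⟨t, ht⟩; rcases hje with ⟨u, hu⟩; omega
    rw [Multiset.count_cons_of_ne hj1, Multiset.count_erase_of_ne hj2]
    have hjm : j ∈ q.parts := by
      rcases Multiset.mem_cons.1 hj with h | h
      · exact absurd h hj1
      · exact Multiset.mem_of_mem_erase h
    exact hq j hjm hje
  · refine ⟨q.parts.sup + 2, ?_, ?_, ?_, ?_⟩
    · rw [bwd1_parts]; exact Multiset.mem_cons_self _ _
    · rcases hodd with ⟨t, ht⟩; exact ⟨t + 1, by omega⟩
    · rw [bwd1_parts, Multiset.count_cons_self,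
        Multiset.count_erase_of_ne (by omega), hcount2]
    · intro j hj
      rw [bwd1_parts] at hj
      rcases Multiset.mem_cons.1 hj with rfl | hj
      · omega
      · have := Multiset.le_sup (α := ℕ) (Multiset.mem_of_mem_erase hj)
        omega

def bwd2 (hn : 1 < n) (q : n.Partition) (hq : CPred q) (hodd : ¬ Odd q.parts.sup) (hm1 : q.parts.sup - 1 ∈ q.parts) :
    (n + 2).Partition where
  parts := (q.parts.sup + 1) ::ₘ q.parts.erase (q.parts.sup - 1)
  parts_pos := by
    intro i hi
    rcases Multiset.mem_cons.1 hi with rfl | hi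
    · omega
    · exact q.parts_pos (Multiset.mem_of_mem_erase hi)
  parts_sum := by
    have hsum : (q.parts.sup - 1) + (q.parts.erase (q.parts.sup - 1)).sum = n := by
      rw [← Multiset.sum_cons, Multiset.cons_erase hm1, q.parts_sum]
    have hpos := q.parts_pos hm1
    rw [Multiset.sum_cons]
    omega

lemma bwd2_parts (hn : 1 < n) (q : n.Partition) (hq : CPred q) (hodd : ¬ Odd q.parts.sup) (hm1 : q.parts.sup - 1 ∈ q.parts) :
    (bwd2 hn q hq hodd hm1).parts = (q.parts.sup + 1) ::ₘ q.parts.erase (q.parts.sup - 1) := rfl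

lemma bwd2_apred (hn : 1 < n) (q : n.Partition) (hq : CPred q) (hodd : ¬ Odd q.parts.sup) (hm1 : q.parts.sup - 1 ∈ q.parts) :
    APred (bwd2 hn q hq hodd hm1) := by
  have hsuppos := sup_pos hn q
  have hsup2 : 2 ≤ q.parts.sup := by
    rw [Nat.not_odd_iff_even] at hodd
    rcases hodd with ⟨t, ht⟩
    omega
  have hcount1 : Multiset.count (q.parts.sup + 1) q.parts = 0 := by
    rw [Multiset.count_eq_zero]
    intro hm
    have := Multiset.le_sup (α := ℕ) hm
    omega
  rw [Nat.not_odd_iff_even] at hodd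
  constructor
  · intro j hj hje
    rw [bwd2_parts] at hj ⊢
    have hj1 : j ≠ q.parts.sup + 1 := by
      rcases hodd with ⟨t, ht⟩; rcases hje with ⟨u, hu⟩; omega
    have hj2 : j ≠ q.parts.sup - 1 := by
      rcases hodd with ⟨t, ht⟩; rcases hje with ⟨u, hu⟩; omega
    rw [Multiset.count_cons_of_ne hj1, Multiset.count_erase_of_ne hj2]
    have hjm : j ∈ q.parts := by
      rcases Multiset.mem_cons.1 hj with h | h
      · exact absurd h hj1
      · exact Multiset.mem_of_mem_erase h
    exact hq j hjm hje
  · refine ⟨q.parts.sup + 1, ?_, ?_, ?_, ?_⟩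
    · rw [bwd2_parts]; exact Multiset.mem_cons_self _ _
    · rcases hodd with ⟨t, ht⟩; exact ⟨t, by omega⟩
    · rw [bwd2_parts, Multiset.count_cons_self,
        Multiset.count_erase_of_ne (by omega), hcount1]
    · intro j hj
      rw [bwd2_parts] at hj
      rcases Multiset.mem_cons.1 hj with rfl | hj
      · omega
      · have := Multiset.le_sup (α := ℕ) (Multiset.mem_of_mem_erase hj)
        omega

def bwd3 (hn : 1 < n) (q : n.Partition) (hq : CPred q) (hodd : ¬ Odd q.parts.sup) : (n - 1).Partition where
  parts := (q.parts.sup - 1) ::ₘ q.parts.erase q.parts.sup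
  parts_pos := by
    intro i hi
    rcases Multiset.mem_cons.1 hi with rfl | hi
    · have hsuppos := sup_pos hn q
      rw [Nat.not_odd_iff_even] at hodd
      rcases hodd with ⟨t, ht⟩
      omega
    · exact q.parts_pos (Multiset.mem_of_mem_erase hi)
  parts_sum := by
    have := sup_sum hn q
    have hsuppos := sup_pos hn q
    rw [Multiset.sum_cons]
    omega

lemma bwd3_parts (hn : 1 < n) (q : n.Partition) (hq : CPred q) (hodd : ¬ Odd q.parts.sup) :
    (bwd3 hn q hq hodd).parts = (q.parts.sup - 1) ::ₘ q.parts.erase q.parts.sup := rfl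

lemma sup_notmem_erase (hn : 1 < n) (q : n.Partition) (hq : CPred q) (hodd : ¬ Odd q.parts.sup) :
    q.parts.sup ∉ q.parts.erase q.parts.sup := by
  have hsupmem := sup_mem_parts hn q
  have hc : Multiset.count q.parts.sup q.parts = 1 :=
    hq _ hsupmem (Nat.not_odd_iff_even.1 hodd)
  rw [← Multiset.count_eq_zero, Multiset.count_erase_self, hc]

lemma bwd3_apred (hn : 1 < n) (q : n.Partition) (hq : CPred q) (hodd : ¬ Odd q.parts.sup) (hm1 : q.parts.sup - 1 ∉ q.parts) :
    APred (bwd3 hn q hq hodd) := by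
  have hsuppos := sup_pos hn q
  have hsup2 : 2 ≤ q.parts.sup := by
    have := Nat.not_odd_iff_even.1 hodd
    rcases this with ⟨t, ht⟩
    omega
  have hnomem := sup_notmem_erase hn q hq hodd
  constructor
  · intro j hj hje
    rw [bwd3_parts] at hj ⊢
    have hj1 : j ≠ q.parts.sup - 1 := by
      have he := Nat.not_odd_iff_even.1 hodd
      rcases he with ⟨t, ht⟩; rcases hje with ⟨u, hu⟩; omega
    have hjm : j ∈ q.parts.erase q.parts.sup := by
      rcases Multiset.mem_cons.1 hj with h | h
      · exact absurd h hj1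
      · exact h
    have hj2 : j ≠ q.parts.sup := fun h => hnomem (h ▸ hjm)
    rw [Multiset.count_cons_of_ne hj1, Multiset.count_erase_of_ne hj2]
    exact hq j (Multiset.mem_of_mem_erase hjm) hje
  · refine ⟨q.parts.sup - 1, ?_, ?_, ?_, ?_⟩
    · rw [bwd3_parts]; exact Multiset.mem_cons_self _ _
    · have he := Nat.not_odd_iff_even.1 hodd
      rcases he with ⟨t, ht⟩
      exact ⟨t - 1, by omega⟩
    · rw [bwd3_parts, Multiset.count_cons_self,
        Multiset.count_erase_of_ne (by omega),
        Multiset.count_eq_zero.2 hm1]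
    · intro j hj
      rw [bwd3_parts] at hj
      rcases Multiset.mem_cons.1 hj with rfl | hj
      · omega
      · have hle := Multiset.le_sup (α := ℕ) (Multiset.mem_of_mem_erase hj)
        have hne : j ≠ q.parts.sup := fun h => hnomem (by rw [h] at hj; exact hj)
        omega

end Bwd


noncomputable def AtoC (hn : 1 < n) :
    {p : (n + 2).Partition // APred p} ⊕ {p : (n - 1).Partition // APred p} →
      {q : n.Partition // CPred q}
  | Sum.inl ⟨p, hp⟩ => ⟨fwdA hn p hp, fwdA_cpred hn p hp⟩
  | Sum.inr ⟨p, hp⟩ => ⟨fwdB hn p hp, fwdB_cpred hn p hp⟩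

noncomputable def CtoAB (hn : 1 < n) (x : {q : n.Partition // CPred q}) :
    {p : (n + 2).Partition // APred p} ⊕ {p : (n - 1).Partition // APred p} :=
  if h1 : Odd x.1.parts.sup then
    Sum.inl ⟨bwd1 hn x.1 x.2 h1, bwd1_apred hn x.1 x.2 h1⟩
  else if h2 : x.1.parts.sup - 1 ∈ x.1.parts then
    Sum.inl ⟨bwd2 hn x.1 x.2 h1 h2, bwd2_apred hn x.1 x.2 h1 h2⟩
  else Sum.inr ⟨bwd3 hn x.1 x.2 h1, bwd3_apred hn x.1 x.2 h1 h2⟩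

lemma CtoAB_AtoC (hn : 1 < n) (x) : CtoAB hn (AtoC hn x) = x := by
  obtain (⟨p, hp⟩ | ⟨p, hp⟩) := x
  · -- the A case
    obtain ⟨hk, hodd, hcount, hmax⟩ := APred_spec hp
    have h3 := APred_three_le (by omega) hp
    set k := p.parts.sup with hkdef
    have hknotin : k ∉ p.parts.erase k := by
      rw [← Multiset.count_eq_zero, Multiset.count_erase_self, hcount]
    have hrest_le : ∀ j ∈ p.parts.erase k, j ≤ k :=
      fun j hj => hmax j (Multiset.mem_of_mem_erase hj)
    dsimp only [AtoC, CtoAB]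
    by_cases hk1 : k - 1 ∈ p.parts
    · have hsup : (fwdA hn p hp).parts.sup = k - 1 := by
        rw [fwdA_parts]
        apply msup_eq
        · exact Multiset.mem_cons_of_mem ((Multiset.mem_erase_of_ne (by omega)).2 hk1)
        · intro j hj
          rcases Multiset.mem_cons.1 hj with rfl | hj
          · omega
          · have h1 := hrest_le j hj
            have h2 : j ≠ k := fun h => hknotin (by rw [h] at hj; exact hj)
            omega
      have hnotodd : ¬ Odd (fwdA hn p hp).parts.sup := by
        rw [hsup]
        rcases hodd with ⟨t, ht⟩
        rintro ⟨u, hu⟩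
        omega
      have hmem : (fwdA hn p hp).parts.sup - 1 ∈ (fwdA hn p hp).parts := by
        rw [hsup, fwdA_parts, show k - 1 - 1 = k - 2 from by omega]
        exact Multiset.mem_cons_self _ _
      rw [dif_neg hnotodd, dif_pos hmem]
      refine congrArg Sum.inl (Subtype.ext (Nat.Partition.ext ?_))
      rw [bwd2_parts, hsup, show k - 1 + 1 = k from by omega,
        show k - 1 - 1 = k - 2 from by omega, fwdA_parts,
        Multiset.erase_cons_head]
      exact Multiset.cons_erase hk
    · have hsup : (fwdA hn p hp).parts.sup = k - 2 := by
        rw [fwdA_parts]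
        apply msup_eq
        · exact Multiset.mem_cons_self _ _
        · intro j hj
          rcases Multiset.mem_cons.1 hj with rfl | hj
          · omega
          · have h1 := hrest_le j hj
            have h2 : j ≠ k := fun h => hknotin (by rw [h] at hj; exact hj)
            have h3' : j ≠ k - 1 := fun h => hk1 (h ▸ Multiset.mem_of_mem_erase hj)
            omega
      have hodd' : Odd (fwdA hn p hp).parts.sup := by
        rw [hsup]
        rcases hodd with ⟨t, ht⟩
        exact ⟨t - 1, by omega⟩
      rw [dif_pos hodd']
      refine congrArg Sum.inl (Subtype.ext (Nat.Partition.ext ?_))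
      rw [bwd1_parts, hsup, show k - 2 + 2 = k from by omega, fwdA_parts,
        Multiset.erase_cons_head]
      exact Multiset.cons_erase hk
  · -- the B case
    obtain ⟨hk, hodd, hcount, hmax⟩ := APred_spec hp
    set k := p.parts.sup with hkdef
    have hknotin : k ∉ p.parts.erase k := by
      rw [← Multiset.count_eq_zero, Multiset.count_erase_self, hcount]
    have hrest_le : ∀ j ∈ p.parts.erase k, j ≤ k :=
      fun j hj => hmax j (Multiset.mem_of_mem_erase hj)
    dsimp only [AtoC, CtoAB]
    have hsup : (fwdB hn p hp).parts.sup = k + 1 := by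
      rw [fwdB_parts]
      apply msup_eq
      · exact Multiset.mem_cons_self _ _
      · intro j hj
        rcases Multiset.mem_cons.1 hj with rfl | hj
        · omega
        · have := hrest_le j hj
          omega
    have hnotodd : ¬ Odd (fwdB hn p hp).parts.sup := by
      rw [hsup]
      rcases hodd with ⟨t, ht⟩
      rintro ⟨u, hu⟩
      omega
    have hnotmem : (fwdB hn p hp).parts.sup - 1 ∉ (fwdB hn p hp).parts := by
      rw [hsup, fwdB_parts, show k + 1 - 1 = k from by omega]
      intro hm
      rcases Multiset.mem_cons.1 hm with h | h
      · omega
      · exact hknotin h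
    rw [dif_neg hnotodd, dif_neg hnotmem]
    refine congrArg Sum.inr (Subtype.ext (Nat.Partition.ext ?_))
    rw [bwd3_parts, hsup, show k + 1 - 1 = k from by omega, fwdB_parts,
      Multiset.erase_cons_head]
    exact Multiset.cons_erase hk

lemma AtoC_CtoAB (hn : 1 < n) (x) : AtoC hn (CtoAB hn x) = x := by
  obtain ⟨q, hq⟩ := x
  have hm : q.parts.sup ∈ q.parts := sup_mem_parts hn q
  have hm1 : 1 ≤ q.parts.sup := sup_pos hn q
  have hrest_le : ∀ j ∈ q.parts.erase q.parts.sup, j ≤ q.parts.sup :=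
    fun j hj => Multiset.le_sup (Multiset.mem_of_mem_erase hj)
  set m := q.parts.sup with hmdef
  dsimp only [CtoAB]
  by_cases h1 : Odd m
  · rw [dif_pos h1]
    dsimp only [AtoC]
    refine Subtype.ext (Nat.Partition.ext ?_)
    have hsup1 : (bwd1 hn q hq h1).parts.sup = m + 2 := by
      rw [bwd1_parts]
      apply msup_eq
      · exact Multiset.mem_cons_self _ _
      · intro j hj
        rcases Multiset.mem_cons.1 hj with rfl | hj
        · omega
        · have := hrest_le j hj
          omega
    rw [fwdA_parts, hsup1, show m + 2 - 2 = m from by omega, bwd1_parts,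
      Multiset.erase_cons_head]
    exact Multiset.cons_erase hm
  · rw [dif_neg h1]
    by_cases h2 : m - 1 ∈ q.parts
    · rw [dif_pos h2]
      dsimp only [AtoC]
      refine Subtype.ext (Nat.Partition.ext ?_)
      have hsup2 : (bwd2 hn q hq h1 h2).parts.sup = m + 1 := by
        rw [bwd2_parts]
        apply msup_eq
        · exact Multiset.mem_cons_self _ _
        · intro j hj
          rcases Multiset.mem_cons.1 hj with rfl | hj
          · omega
          · have := Multiset.le_sup (α := ℕ) (Multiset.mem_of_mem_erase hj)
            omega
      rw [fwdA_parts, hsup2, show m + 1 - 2 = m - 1 from by omega, bwd2_parts,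
        Multiset.erase_cons_head]
      exact Multiset.cons_erase h2
    · rw [dif_neg h2]
      dsimp only [AtoC]
      refine Subtype.ext (Nat.Partition.ext ?_)
      have hnomem := sup_notmem_erase hn q hq h1
      have hsup3 : (bwd3 hn q hq h1).parts.sup = m - 1 := by
        rw [bwd3_parts]
        apply msup_eq
        · exact Multiset.mem_cons_self _ _
        · intro j hj
          rcases Multiset.mem_cons.1 hj with rfl | hj
          · omega
          · have hle := hrest_le j hj
            have hne : j ≠ m := fun h => hnomem (by rw [h] at hj; exact hj)
            omega
      rw [fwdB_parts, hsup3, show m - 1 + 1 = m from by omega, bwd3_parts,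
        Multiset.erase_cons_head]
      exact Multiset.cons_erase hm

/-- The equivalence of step A. -/
noncomputable def stepAEquiv (hn : 1 < n) :
    ({p : (n + 2).Partition // APred p} ⊕ {p : (n - 1).Partition // APred p}) ≃
      {q : n.Partition // CPred q} where
  toFun := AtoC hn
  invFun := CtoAB hn
  left_inv := CtoAB_AtoC hn
  right_inv := AtoC_CtoAB hn

end Stmt8


theorem stmt_8 (n : ℕ) (hn : 1 < n) :
    DE3 (n + 2) + DE3 (n - 1) =
      Nat.card {p : n.Partition // ∀ k ∈ p.parts, ¬ (4 ∣ k)} := by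
  have h1 : DE3 (n + 2) = Nat.card {p : (n + 2).Partition // Stmt8.APred p} := rfl
  have h2 : DE3 (n - 1) = Nat.card {p : (n - 1).Partition // Stmt8.APred p} := rfl
  rw [h1, h2, ← Nat.card_sum]
  exact Nat.card_congr ((Stmt8.stepAEquiv hn).trans (Stmt8.glaisherEquiv n))
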